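/- Consider the projected recursion x_{t+1} = Π_X[x_t + α(A_ff x_t + A_fs y_t − b1 + ε_t)] with constant step size α > 0, arbitrary sequences (y_t) ⊆ ℝ^m and (ε_t) ⊆ ℝ^n, and x_0 ∈ X. Suppose U_Xᵀ A_ff U_X is invertible and set c1 := U_X (U_Xᵀ A_ff U_X)^{-1} U_Xᵀ and, for y ∈ ℝ^m, x_p*(y) := c1 (b1 − A_fs y). Then for every T ≥ 1, with x̄_T := (1/T)Σ_{t=0}^{T−1} x_t, ȳ_T := (1/T)Σ_{t=0}^{T−1} y_t, and ε̄_T := Σ_{t=0}^{T−1} ε_t, one has the exact identity x̄_T − x_p*(ȳ_T) = (c1/T)((x_T − x_0)/α − Π_X ε̄_T). -/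

import Mathlib

open Matrix MeasureTheory Finset
open scoped BigOperators

noncomputable section
namespace TTSA

abbrev E (n : ℕ) : Type := EuclideanSpace ℝ (Fin n)

def mv {k l : ℕ} (M : Matrix (Fin k) (Fin l) ℝ) (x : E l) : E k :=
  Matrix.toEuclideanLin M x

def specNorm {k l : ℕ} (M : Matrix (Fin k) (Fin l) ℝ) : ℝ :=
  ‖LinearMap.toContinuousLinearMap (Matrix.toEuclideanLin M)‖

def sigmaMin {k : ℕ} (M : Matrix (Fin k) (Fin k) ℝ) : ℝ :=
  sInf ((fun v : E k => ‖mv M v‖) '' {v | ‖v‖ = 1})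

def resolvent {k l : ℕ} (U : Matrix (Fin k) (Fin l) ℝ) (A : Matrix (Fin k) (Fin k) ℝ) :
    Matrix (Fin k) (Fin k) ℝ :=
  U * (Uᵀ * A * U)⁻¹ * Uᵀ

lemma mv_mv {k l p : ℕ} (M : Matrix (Fin k) (Fin l) ℝ) (N : Matrix (Fin l) (Fin p) ℝ) (x : E p) :
    mv M (mv N x) = mv (M * N) x := by
  simp [mv, Matrix.toEuclideanLin_eq_toLin, Matrix.toLin_mul _ (PiLp.basisFun 2 ℝ (Fin l)) _]

lemma mv_add {k l : ℕ} (M : Matrix (Fin k) (Fin l) ℝ) (a b : E l) :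
    mv M (a + b) = mv M a + mv M b := map_add _ _ _
lemma mv_sub {k l : ℕ} (M : Matrix (Fin k) (Fin l) ℝ) (a b : E l) :
    mv M (a - b) = mv M a - mv M b := map_sub _ _ _
lemma mv_smul {k l : ℕ} (M : Matrix (Fin k) (Fin l) ℝ) (c : ℝ) (a : E l) :
    mv M (c • a) = c • mv M a := map_smul _ _ _
lemma mv_sum {k l : ℕ} (M : Matrix (Fin k) (Fin l) ℝ) (s : Finset ℕ) (f : ℕ → E l) :
    mv M (∑ t ∈ s, f t) = ∑ t ∈ s, mv M (f t) := map_sum _ _ _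

/-- exact inverted identity for the fast Polyak–Ruppert average
around the instantaneous constrained solution `x_p*(ȳ_T) = c1 (b1 - A_fs ȳ_T)`,
with `c1 = resolvent U_X A_ff`. -/
theorem fast_inverted_identity {n m d : ℕ}
    (Aff : Matrix (Fin n) (Fin n) ℝ) (Afs : Matrix (Fin n) (Fin m) ℝ)
    (b1 : E n)
    (UX : Matrix (Fin n) (Fin d) ℝ) (hUX : UXᵀ * UX = 1)
    (h1 : IsUnit (UXᵀ * Aff * UX))
    (α : ℝ) (hα : 0 < α)
    (y : ℕ → E m) (ε : ℕ → E n) (x : ℕ → E n)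
    (hx0 : x 0 ∈ Set.range (mv UX))
    (hrec : ∀ t : ℕ, x (t + 1) =
      mv (UX * UXᵀ) (x t + α • (mv Aff (x t) + mv Afs (y t) - b1 + ε t))) :
    ∀ T : ℕ, 1 ≤ T →
      (T : ℝ)⁻¹ • (∑ t ∈ Finset.range T, x t) -
        mv (resolvent UX Aff)
          (b1 - mv Afs ((T : ℝ)⁻¹ • (∑ t ∈ Finset.range T, y t))) =
      (T : ℝ)⁻¹ • mv (resolvent UX Aff)
        (α⁻¹ • (x T - x 0) - mv (UX * UXᵀ) (∑ t ∈ Finset.range T, ε t)) := by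
  set Pi : Matrix (Fin n) (Fin n) ℝ := UX * UXᵀ with hPidef
  set c1 : Matrix (Fin n) (Fin n) ℝ := resolvent UX Aff with hc1def
  have hdet : IsUnit (UXᵀ * Aff * UX).det := (Matrix.isUnit_iff_isUnit_det _).mp h1
  have hinv : (UXᵀ * Aff * UX)⁻¹ * (UXᵀ * Aff * UX) = 1 := Matrix.nonsing_inv_mul _ hdet
  have hUPi : UXᵀ * Pi = UXᵀ := by
    rw [hPidef, ← Matrix.mul_assoc, hUX, Matrix.one_mul]
  have hPiPi : Pi * Pi = Pi := by
    rw [hPidef]; rw [Matrix.mul_assoc]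
    conv_lhs => rw [← Matrix.mul_assoc UXᵀ, hUX, Matrix.one_mul]
  have hPiU : Pi * UX = UX := by
    rw [hPidef, Matrix.mul_assoc, hUX, Matrix.mul_one]
  have hc1Pi : c1 * Pi = c1 := by
    rw [hc1def, resolvent, Matrix.mul_assoc, hUPi]
  have hc1AffPi : c1 * Aff * Pi = Pi := by
    rw [hc1def, resolvent]
    calc UX * (UXᵀ * Aff * UX)⁻¹ * UXᵀ * Aff * Pi
        = UX * ((UXᵀ * Aff * UX)⁻¹ * (UXᵀ * Aff * UX)) * UXᵀ := by
          rw [hPidef]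
          simp only [Matrix.mul_assoc]
      _ = Pi := by rw [hinv, Matrix.mul_one, hPidef]
  -- every iterate stays in the range of Pi
  have hPix : ∀ t, mv Pi (x t) = x t := by
    intro t
    induction t with
    | zero =>
      obtain ⟨v, hv⟩ := hx0
      rw [← hv, mv_mv, hPiU]
    | succ t _ =>
      rw [hrec t, mv_mv, hPiPi]
  have hαne : α ≠ 0 := ne_of_gt hα
  -- per-step identity
  have hstep : ∀ t, mv c1 (α⁻¹ • (x (t+1) - x t)) =
      x t + mv c1 (mv Afs (y t)) - mv c1 b1 + mv c1 (mv Pi (ε t)) := by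
    intro t
    have hd : x (t+1) - x t =
        α • (mv Pi (mv Aff (x t)) + mv Pi (mv Afs (y t)) - mv Pi b1 + mv Pi (ε t)) := by
      rw [hrec t]
      simp only [← hPidef, mv_add, mv_sub, mv_smul, hPix t]
      abel
    rw [hd, smul_smul, inv_mul_cancel₀ hαne, one_smul]
    simp only [mv_add, mv_sub, mv_mv, hc1Pi]
    have e1 : c1 * (Pi * Afs) = c1 * Afs := by rw [← Matrix.mul_assoc, hc1Pi]
    have e2 : mv (c1 * (Pi * Aff)) (x t) = x t := by
      rw [← Matrix.mul_assoc, hc1Pi]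
      conv_lhs => rw [← hPix t]
      rw [mv_mv, hc1AffPi, hPix t]
    rw [e1, e2]
  intro T hT
  have hTne : (T : ℝ) ≠ 0 := Nat.cast_ne_zero.mpr (by omega)
  -- sum the per-step identity
  have hsum : mv c1 (α⁻¹ • (x T - x 0) - mv Pi (∑ t ∈ Finset.range T, ε t)) =
      (∑ t ∈ Finset.range T, x t) + mv c1 (mv Afs (∑ t ∈ Finset.range T, y t))
        - (T : ℝ) • mv c1 b1 := by
    have htel : α⁻¹ • (x T - x 0) = ∑ t ∈ Finset.range T, α⁻¹ • (x (t+1) - x t) := by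
      rw [← Finset.smul_sum, Finset.sum_range_sub]
    rw [mv_sub, htel, mv_sum, mv_sum, mv_sum]
    simp only [hstep]
    rw [Finset.sum_add_distrib, Finset.sum_sub_distrib, Finset.sum_add_distrib,
      Finset.sum_const, Finset.card_range, ← mv_sum, ← mv_sum, ← mv_sum]
    simp only [← Nat.cast_smul_eq_nsmul ℝ]
    abel
  calc (T : ℝ)⁻¹ • (∑ t ∈ Finset.range T, x t) -
        mv c1 (b1 - mv Afs ((T : ℝ)⁻¹ • (∑ t ∈ Finset.range T, y t)))
      = (T : ℝ)⁻¹ • ((∑ t ∈ Finset.range T, x t) + mv c1 (mv Afs (∑ t ∈ Finset.range T, y t))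
          - (T : ℝ) • mv c1 b1) := by
        rw [mv_sub, mv_smul, mv_smul, smul_sub, smul_add, smul_smul,
          inv_mul_cancel₀ hTne, one_smul]
        abel
    _ = (T : ℝ)⁻¹ • mv c1 (α⁻¹ • (x T - x 0) - mv Pi (∑ t ∈ Finset.range T, ε t)) := by
        rw [hsum]

end TTSA
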